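/- Precision theorem: Let D be a quantale, sem : E → D, and let I[p] denote the interpretation of a regular expression p over E in D. Then I[p] equals the supremum over all words w = e₁⋯eₙ in the language of p of sem(e₁) ⊙ ⋯ ⊙ sem(eₙ) (with the empty word interpreted as 1). -/

import Mathlib

/-- A quantale: a complete lattice with a monoid operation distributing over
arbitrary suprema in both arguments. -/
structure Quantale' (K : Type*) [CompleteLattice K] where
  mul : K → K → K
  one : K
  mul_assoc : ∀ a b c, mul (mul a b) c = mul a (mul b c)
  one_mul : ∀ a, mul one a = a
  mul_one : ∀ a, mul a one = a
  mul_sSup : ∀ (a : K) (S : Set K), mul a (sSup S) = sSup (Set.image (mul a) S)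
  sSup_mul : ∀ (a : K) (S : Set K), mul (sSup S) a = sSup (Set.image (fun b => mul b a) S)

/-- n-fold product in a quantale: `a^0 = 1`, `a^(n+1) = a^n ⊙ a`. -/
def Quantale'.pow {K : Type*} [CompleteLattice K] (Q : Quantale' K) (a : K) : ℕ → K
  | 0 => Q.one
  | n + 1 => Q.mul (Q.pow a n) a

/-- Iteration: `a⋆ = sup_{n ∈ ℕ} a^n`. -/
def Quantale'.star {K : Type*} [CompleteLattice K] (Q : Quantale' K) (a : K) : K :=
  ⨆ n, Q.pow a n

/-- Regular expressions over alphabet `E`. -/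
inductive RegExp (E : Type*) where
  | zero : RegExp E
  | eps : RegExp E
  | char : E → RegExp E
  | plus : RegExp E → RegExp E → RegExp E
  | cat : RegExp E → RegExp E → RegExp E
  | star : RegExp E → RegExp E

/-- The language of a regular expression. -/
def RegExp.lang {E : Type*} : RegExp E → Language E
  | .zero => 0
  | .eps => 1
  | .char e => {[e]}
  | .plus p q => p.lang + q.lang
  | .cat p q => p.lang * q.lang
  | .star p => KStar.kstar p.lang

/-- Interpretation of a regular expression in a quantale. -/
def Quantale'.interp {K : Type*} [CompleteLattice K] {E : Type*} (Q : Quantale' K)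
    (sem : E → K) : RegExp E → K
  | .zero => ⊥
  | .eps => Q.one
  | .char e => sem e
  | .plus p q => Q.interp sem p ⊔ Q.interp sem q
  | .cat p q => Q.mul (Q.interp sem p) (Q.interp sem q)
  | .star p => Q.star (Q.interp sem p)

/-- Interpretation of a word: `sem e₁ ⊙ ⋯ ⊙ sem eₙ` (the empty word is `1`). -/
def Quantale'.semWord {K : Type*} [CompleteLattice K] {E : Type*} (Q : Quantale' K)
    (sem : E → K) (w : List E) : K :=
  w.foldr (fun e k => Q.mul (sem e) k) Q.one

lemma semWord_append {K : Type*} [CompleteLattice K] {E : Type*} (Q : Quantale' K)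
    (sem : E → K) (u v : List E) :
    Q.semWord sem (u ++ v) = Q.mul (Q.semWord sem u) (Q.semWord sem v) := by
  induction u with
  | nil => simp [Quantale'.semWord, Q.one_mul]
  | cons e u ih =>
    show Q.mul (sem e) (Q.semWord sem (u ++ v))
        = Q.mul (Q.mul (sem e) (Q.semWord sem u)) (Q.semWord sem v)
    rw [ih, Q.mul_assoc]

lemma mul_sSup_sSup {K : Type*} [CompleteLattice K] (Q : Quantale' K) (S T : Set K) :
    Q.mul (sSup S) (sSup T) = sSup {x | ∃ s ∈ S, ∃ t ∈ T, x = Q.mul s t} := by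
  rw [Q.sSup_mul]
  apply le_antisymm
  · apply sSup_le
    rintro x ⟨s, hs, rfl⟩
    dsimp only
    rw [Q.mul_sSup]
    apply sSup_le
    rintro x ⟨t, ht, rfl⟩
    exact le_sSup ⟨s, hs, t, ht, rfl⟩
  · apply sSup_le
    rintro x ⟨s, hs, t, ht, rfl⟩
    have h1 : Q.mul s t ≤ Q.mul s (sSup T) := by
      rw [Q.mul_sSup]; exact le_sSup ⟨t, ht, rfl⟩
    have h2 : Q.mul s (sSup T) ≤ sSup (Set.image (fun b => Q.mul b (sSup T)) S) :=
      le_sSup ⟨s, hs, rfl⟩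
    exact h1.trans h2

lemma sSup_image_mul {K : Type*} [CompleteLattice K] {E : Type*} (Q : Quantale' K)
    (sem : E → K) (L1 L2 : Language E) :
    sSup (Q.semWord sem '' (L1 * L2))
      = Q.mul (sSup (Q.semWord sem '' L1)) (sSup (Q.semWord sem '' L2)) := by
  rw [mul_sSup_sSup]
  congr 1
  ext x
  constructor
  · rintro ⟨w, hw, rfl⟩
    rcases Language.mem_mul.mp hw with ⟨u, hu, v, hv, rfl⟩
    exact ⟨_, ⟨u, hu, rfl⟩, _, ⟨v, hv, rfl⟩, semWord_append Q sem u v⟩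
  · rintro ⟨_, ⟨u, hu, rfl⟩, _, ⟨v, hv, rfl⟩, rfl⟩
    exact ⟨u ++ v, Language.mem_mul.mpr ⟨u, hu, v, hv, rfl⟩,
      semWord_append Q sem u v⟩

lemma sSup_image_pow {K : Type*} [CompleteLattice K] {E : Type*} (Q : Quantale' K)
    (sem : E → K) (L : Language E) (n : ℕ) :
    Q.pow (sSup (Q.semWord sem '' L)) n = sSup (Q.semWord sem '' (L ^ n)) := by
  induction n with
  | zero =>
    erw [pow_zero,
      show ((1 : Language E) : Set (List E)) = {([] : List E)} from
        Set.ext fun x => Language.mem_one x,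
      Set.image_singleton, sSup_singleton]
    rfl
  | succ n ih =>
    rw [pow_succ, sSup_image_mul, ← ih]
    rfl

/-- Precision: over a quantale, the interpretation of `p` is exactly the supremum of the
interpretations of the words in the language of `p`. -/
theorem quantale_precision {K : Type*} [CompleteLattice K] {E : Type*} (Q : Quantale' K)
    (sem : E → K) (p : RegExp E) :
    Q.interp sem p = sSup (Q.semWord sem '' p.lang) := by
  induction p with
  | zero =>
    show (⊥ : K) = sSup (Q.semWord sem '' ((0 : Language E) : Set (List E)))
    rw [show ((0 : Language E) : Set (List E)) = (∅ : Set (List E)) from rfl,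
      Set.image_empty, sSup_empty]
  | eps =>
    show Q.one = sSup (Q.semWord sem '' ((1 : Language E) : Set (List E)))
    erw [show ((1 : Language E) : Set (List E)) = {([] : List E)} from
        Set.ext fun x => Language.mem_one x,
      Set.image_singleton, sSup_singleton]
    rfl
  | char e =>
    show sem e = sSup (Q.semWord sem '' ({[e]} : Set (List E)))
    rw [Set.image_singleton, sSup_singleton]
    show sem e = Q.mul (sem e) Q.one
    rw [Q.mul_one]
  | plus p q ihp ihq =>
    erw [show Q.interp sem (.plus p q) = Q.interp sem p ⊔ Q.interp sem q from rfl,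
      ihp, ihq, ← sSup_union, ← Set.image_union]
    rfl
  | cat p q ihp ihq =>
    rw [show Q.interp sem (.cat p q) = Q.mul (Q.interp sem p) (Q.interp sem q) from rfl,
      ihp, ihq, ← sSup_image_mul]
    rfl
  | star p ih =>
    rw [show Q.interp sem (.star p) = Q.star (Q.interp sem p) from rfl, Quantale'.star, ih]
    have hk : ((RegExp.star p).lang : Language E) = ⨆ i : ℕ, p.lang ^ i := by
      simpa [RegExp.lang] using Language.kstar_eq_iSup_pow p.lang
    rw [hk]
    have himg : (Q.semWord sem '' (⨆ i : ℕ, p.lang ^ i : Language E))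
        = ⋃ i : ℕ, Q.semWord sem '' (p.lang ^ i : Language E) := by
      rw [show ((⨆ i : ℕ, p.lang ^ i : Language E) : Set (List E))
          = ⋃ i : ℕ, (p.lang ^ i : Language E) from by
        ext x; exact Language.mem_iSup.trans Set.mem_iUnion.symm]
      exact Set.image_iUnion
    rw [himg, sSup_iUnion]
    exact iSup_congr fun n => sSup_image_pow Q sem p.lang n
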